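/- Suppose η, χ : ℝ → ℝ are differentiable on [0,T] and satisfy η'(t) = 2(a+q)η(t) + η(t)² − (ε − q²) and χ'(t) = −½σ²(1−ρ²)η(t) for t ∈ [0,T], with η(T) = c and χ(T) = 0. Then the function V(t,x,m) = (η(t)/2)(x − m)² + χ(t) satisfies, for all (t,x,m) ∈ [0,T] × ℝ × ℝ, the master equation ∂_t V + (a+q)(m − x)∂_x V + ½(ε − q²)(m − x)² − ½(∂_x V)² + (σ²/2)∂²_x V + (σ²ρ²/2)∂²_m V + σ²ρ² ∂²_{xm} V = 0, together with the terminal condition V(T,x,m) = (c/2)(m − x)². -/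
import Mathlib


/-- If `η, χ` solve `η'(t) = 2(a+q) η(t) + η(t)² − (ε − q²)` and
`χ'(t) = −½ σ² (1−ρ²) η(t)` on `[0,T]` with `η(T) = c`, `χ(T) = 0`, then
`V(t,x,m) = (η(t)/2)(x − m)² + χ(t)` satisfies the master equation
`∂_t V + (a+q)(m − x) ∂_x V + ½(ε − q²)(m − x)² − ½(∂_x V)²
 + (σ²/2) ∂²_x V + (σ²ρ²/2) ∂²_m V + σ²ρ² ∂²_{xm} V = 0`
on `[0,T] × ℝ × ℝ`, with terminal condition `V(T,x,m) = (c/2)(m − x)²`. -/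
theorem statement_9 (T a q ε c σ ρ : ℝ) (hT : 0 < T)
    (ha : 0 ≤ a) (hq : 0 ≤ q) (hc : 0 ≤ c) (hσ : 0 < σ) (hρ₁ : -1 ≤ ρ) (hρ₂ : ρ ≤ 1)
    (η χ : ℝ → ℝ)
    (hη : ∀ t ∈ Set.Icc (0 : ℝ) T,
      HasDerivAt η (2 * (a + q) * η t + η t ^ 2 - (ε - q ^ 2)) t)
    (hχ : ∀ t ∈ Set.Icc (0 : ℝ) T,
      HasDerivAt χ (-(1 / 2) * σ ^ 2 * (1 - ρ ^ 2) * η t) t)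
    (hηT : η T = c) (hχT : χ T = 0)
    (V : ℝ → ℝ → ℝ → ℝ)
    (hV : ∀ t x m, V t x m = η t / 2 * (x - m) ^ 2 + χ t) :
    ∀ t ∈ Set.Icc (0 : ℝ) T, ∀ x m : ℝ,
      (deriv (fun s => V s x m) t
        + (a + q) * (m - x) * deriv (fun y => V t y m) x
        + 1 / 2 * (ε - q ^ 2) * (m - x) ^ 2
        - 1 / 2 * (deriv (fun y => V t y m) x) ^ 2
        + σ ^ 2 / 2 * deriv (fun y => deriv (fun y' => V t y' m) y) x
        + σ ^ 2 * ρ ^ 2 / 2 * deriv (fun u => deriv (fun u' => V t x u') u) m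
        + σ ^ 2 * ρ ^ 2 * deriv (fun y => deriv (fun u => V t y u) m) x = 0)
      ∧ V T x m = c / 2 * (m - x) ^ 2 := by
  intro t ht x m
  -- derivative in x of V t · m
  have hx : ∀ y : ℝ, HasDerivAt (fun y' => V t y' m) (η t * (y - m)) y := by
    intro y
    have h : HasDerivAt (fun y' : ℝ => η t / 2 * (y' - m) ^ 2 + χ t)
        (η t / 2 * ((2 : ℕ) * (y - m) ^ 1 * 1)) y :=
      ((((hasDerivAt_id y).sub_const m).pow 2).const_mul (η t / 2)).add_const (χ t)
    have h2 : HasDerivAt (fun y' => V t y' m) (η t / 2 * ((2 : ℕ) * (y - m) ^ 1 * 1)) y := by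
      simpa only [hV] using h
    convert h2 using 1; push_cast; ring
  have hVx : (fun y => deriv (fun y' => V t y' m) y) = fun y => η t * (y - m) := by
    funext y; exact (hx y).deriv
  -- derivative in m of V t x ·
  have hm : ∀ u : ℝ, HasDerivAt (fun u' => V t x u') (η t * (u - x)) u := by
    intro u
    have h : HasDerivAt (fun u' : ℝ => η t / 2 * (x - u') ^ 2 + χ t)
        (η t / 2 * ((2 : ℕ) * (x - u) ^ 1 * (0 - 1))) u :=
      (((((hasDerivAt_const u x).sub (hasDerivAt_id u)).pow 2).const_mul (η t / 2)).add_const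
        (χ t))
    have h2 : HasDerivAt (fun u' => V t x u') (η t / 2 * ((2 : ℕ) * (x - u) ^ 1 * (0 - 1))) u := by
      simpa only [hV] using h
    convert h2 using 1; push_cast; ring
  have hVm : (fun u => deriv (fun u' => V t x u') u) = fun u => η t * (u - x) := by
    funext u; exact (hm u).deriv
  -- derivative in m of V t y ·, as a function of y
  have hVmix : (fun y => deriv (fun u => V t y u) m) = fun y => η t * (m - y) := by
    funext y
    have h : HasDerivAt (fun u : ℝ => η t / 2 * (y - u) ^ 2 + χ t)
        (η t / 2 * ((2 : ℕ) * (y - m) ^ 1 * (0 - 1))) m :=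
      (((((hasDerivAt_const m y).sub (hasDerivAt_id m)).pow 2).const_mul (η t / 2)).add_const
        (χ t))
    have h2 : HasDerivAt (fun u => V t y u) (η t / 2 * ((2 : ℕ) * (y - m) ^ 1 * (0 - 1))) m := by
      simpa only [hV] using h
    have := h2.deriv
    rw [this]; push_cast; ring
  -- time derivative
  have hdt : HasDerivAt (fun s => V s x m)
      ((2 * (a + q) * η t + η t ^ 2 - (ε - q ^ 2)) / 2 * (x - m) ^ 2
        + -(1 / 2) * σ ^ 2 * (1 - ρ ^ 2) * η t) t := by
    have h : HasDerivAt (fun s => η s / 2 * (x - m) ^ 2 + χ s)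
        ((2 * (a + q) * η t + η t ^ 2 - (ε - q ^ 2)) / 2 * (x - m) ^ 2
          + -(1 / 2) * σ ^ 2 * (1 - ρ ^ 2) * η t) t :=
      (((hη t ht).div_const 2).mul_const ((x - m) ^ 2)).add (hχ t ht)
    simpa only [hV] using h
  -- second derivatives
  have hdxx : deriv (fun y => deriv (fun y' => V t y' m) y) x = η t := by
    rw [hVx]
    have : HasDerivAt (fun y : ℝ => η t * (y - m)) (η t * 1) x :=
      ((hasDerivAt_id x).sub_const m).const_mul (η t)
    simpa using this.deriv
  have hdmm : deriv (fun u => deriv (fun u' => V t x u') u) m = η t := by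
    rw [hVm]
    have : HasDerivAt (fun u : ℝ => η t * (u - x)) (η t * 1) m :=
      ((hasDerivAt_id m).sub_const x).const_mul (η t)
    simpa using this.deriv
  have hdxm : deriv (fun y => deriv (fun u => V t y u) m) x = -η t := by
    rw [hVmix]
    have : HasDerivAt (fun y : ℝ => η t * (m - y)) (η t * (0 - 1)) x :=
      ((hasDerivAt_const x m).sub (hasDerivAt_id x)).const_mul (η t)
    rw [this.deriv]; ring
  refine ⟨?_, ?_⟩
  · rw [hdt.deriv, (hx x).deriv, hdxx, hdmm, hdxm]
    ring
  · rw [hV, hηT, hχT]; ring
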